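/- Let n ≥ 2 and let k be an integer with 1 ≤ k ≤ n−1. The number of admissible sequences i = (i_1,…,i_n) whose last entry i_n equals k (as an element of ℤ/nℤ) is the binomial coefficient C(n−2, k−1). -/

import Mathlib

/-- A sequence `(i_1,…,i_n)` of elements of `ZMod n`, encoded as `f : Fin n → ZMod n`
(0-based positions), is *admissible* if it is a permutation of `(0,1,…,n−1)`, its first
entry is `0`, and every later entry is a neighbor (in the cycle `ZMod n`) of some earlier
entry. -/
def Admissible (n : ℕ) (f : Fin n → ZMod n) : Prop :=
  Function.Bijective f ∧
  (∀ h : 0 < n, f ⟨0, h⟩ = 0) ∧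
  ∀ k : Fin n, 1 ≤ k.val → ∃ l : Fin n, l < k ∧ (f k = f l + 1 ∨ f k = f l - 1)

/-- rank of `j` in `T`: number of elements of `T` that are `≤ j`. -/
def rk {m : ℕ} (T : Finset (Fin m)) (j : Fin m) : ℕ := (T.filter (· ≤ j)).card

lemma rk_pos {m : ℕ} {T : Finset (Fin m)} {j : Fin m} (hj : j ∈ T) : 1 ≤ rk T j := by
  have : j ∈ T.filter (· ≤ j) := Finset.mem_filter.2 ⟨hj, le_refl j⟩
  exact Finset.card_pos.2 ⟨j, this⟩

lemma rk_le_card {m : ℕ} (T : Finset (Fin m)) (j : Fin m) : rk T j ≤ T.card :=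
  Finset.card_le_card (Finset.filter_subset _ _)

lemma rk_strict {m : ℕ} {T : Finset (Fin m)} {j j' : Fin m} (h : j < j') (hj' : j' ∈ T) :
    rk T j < rk T j' := by
  apply Finset.card_lt_card
  constructor
  · intro x hx
    rcases Finset.mem_filter.1 hx with ⟨h1, h2⟩
    exact Finset.mem_filter.2 ⟨h1, le_trans h2 h.le⟩
  · intro hsub
    have : j' ∈ T.filter (· ≤ j) := hsub (Finset.mem_filter.2 ⟨hj', le_refl _⟩)
    have := (Finset.mem_filter.1 this).2
    exact absurd h (not_lt.2 this)

lemma rk_injOn {m : ℕ} {T : Finset (Fin m)} {j j' : Fin m} (hj : j ∈ T) (hj' : j' ∈ T)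
    (h : rk T j = rk T j') : j = j' := by
  rcases lt_trichotomy j j' with h1 | h1 | h1
  · exact absurd h (rk_strict h1 hj').ne
  · exact h1
  · exact absurd h.symm (rk_strict h1 hj).ne

lemma rk_pred {m : ℕ} {T : Finset (Fin m)} {j : Fin m} (hj : j ∈ T) (h2 : 2 ≤ rk T j) :
    ∃ j' ∈ T, j' < j ∧ rk T j' + 1 = rk T j := by
  have hins : T.filter (· ≤ j) = insert j (T.filter (· < j)) := by
    ext x
    simp only [Finset.mem_filter, Finset.mem_insert]
    constructor
    · rintro ⟨hx, hle⟩
      rcases eq_or_lt_of_le hle with h | h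
      · exact Or.inl h
      · exact Or.inr ⟨hx, h⟩
    · rintro (rfl | ⟨hx, hlt⟩)
      · exact ⟨hj, le_refl _⟩
      · exact ⟨hx, hlt.le⟩
  have hjnot : j ∉ T.filter (· < j) := by
    simp only [Finset.mem_filter]
    rintro ⟨-, h⟩; exact lt_irrefl _ h
  have hcard : rk T j = (T.filter (· < j)).card + 1 := by
    rw [rk, hins, Finset.card_insert_of_notMem hjnot]
  have hne : (T.filter (· < j)).Nonempty := by
    rw [← Finset.card_pos]; omega
  set j' := (T.filter (· < j)).max' hne with hj'def
  have hj'mem : j' ∈ T.filter (· < j) := Finset.max'_mem _ hne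
  rcases Finset.mem_filter.1 hj'mem with ⟨hj'T, hj'lt⟩
  refine ⟨j', hj'T, hj'lt, ?_⟩
  have : T.filter (· ≤ j') = T.filter (· < j) := by
    ext x
    simp only [Finset.mem_filter]
    constructor
    · rintro ⟨hx, hle⟩
      exact ⟨hx, lt_of_le_of_lt hle hj'lt⟩
    · rintro ⟨hx, hlt⟩
      have hxm : x ∈ T.filter (· < j) := Finset.mem_filter.2 ⟨hx, hlt⟩
      exact ⟨hx, Finset.le_max' _ x hxm⟩
  rw [rk, this]; omega

lemma rk_max' {m : ℕ} (T : Finset (Fin m)) (hne : T.Nonempty) :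
    rk T (T.max' hne) = T.card := by
  rw [rk]
  congr 1
  apply Finset.filter_true_of_mem
  intro x hx
  exact Finset.le_max' _ _ hx

section Main

variable (n k : ℕ)

/-- the natural-number value intended at position `p`. -/
def natval (S : Finset (Fin (n - 2))) (p : ℕ) : ℕ :=
  if p = 0 then 0
  else if p = n - 1 then k
  else if h : p - 1 < n - 2 then
    (if (⟨p - 1, h⟩ : Fin (n - 2)) ∈ S then rk S ⟨p - 1, h⟩ else n - rk Sᶜ ⟨p - 1, h⟩)
  else 0

/-- the candidate admissible sequence associated to a finset of "right move" steps. -/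
def Fm (S : Finset (Fin (n - 2))) : Fin n → ZMod n := fun p => (natval n k S p.val : ZMod n)

/-- the position in `Fin n` corresponding to a step index. -/
def pos (j : Fin (n - 2)) : Fin n := ⟨j.val + 1, by have := j.isLt; omega⟩

lemma pos_val {j : Fin (n - 2)} : (pos n j).val = j.val + 1 := rfl

/-- the finset of "right move" steps associated to a sequence. -/
def Gm (f : Fin n → ZMod n) : Finset (Fin (n - 2)) :=
  Finset.univ.filter (fun j => (f (pos n j)).val < k)

variable {n k}

lemma natval_zero (S : Finset (Fin (n - 2))) : natval n k S 0 = 0 := by simp [natval]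

lemma natval_last (S : Finset (Fin (n - 2))) (hn : 2 ≤ n) : natval n k S (n - 1) = k := by
  simp only [natval]
  rw [if_neg (by omega)]
  simp

lemma natval_mem {S : Finset (Fin (n - 2))} {p : ℕ} {j : Fin (n - 2)}
    (hpj : p = j.val + 1) (hj : j ∈ S) :
    natval n k S p = rk S j := by
  have hjlt := j.isLt
  have hp2 : p - 1 < n - 2 := by omega
  simp only [natval]
  rw [if_neg (by omega), if_neg (by omega), dif_pos hp2]
  have hje : (⟨p - 1, hp2⟩ : Fin (n - 2)) = j := Fin.ext (by simp; omega)
  rw [hje, if_pos hj]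

lemma natval_not_mem {S : Finset (Fin (n - 2))} {p : ℕ} {j : Fin (n - 2)}
    (hpj : p = j.val + 1) (hj : j ∉ S) :
    natval n k S p = n - rk Sᶜ j := by
  have hjlt := j.isLt
  have hp2 : p - 1 < n - 2 := by omega
  simp only [natval]
  rw [if_neg (by omega), if_neg (by omega), dif_pos hp2]
  have hje : (⟨p - 1, hp2⟩ : Fin (n - 2)) = j := Fin.ext (by simp; omega)
  rw [hje, if_neg hj]

lemma compl_card {S : Finset (Fin (n - 2))} (hk1 : 1 ≤ k) (hk2 : k ≤ n - 1)
    (hS : S.card = k - 1) : Sᶜ.card = n - 1 - k := by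
  rw [Finset.card_compl, hS]
  simp only [Fintype.card_fin]
  omega

lemma natval_mem_bounds {S : Finset (Fin (n - 2))} {p : ℕ} {j : Fin (n - 2)}
    (hS : S.card = k - 1) (hpj : p = j.val + 1) (hj : j ∈ S) :
    1 ≤ natval n k S p ∧ natval n k S p ≤ k - 1 := by
  rw [natval_mem hpj hj]
  exact ⟨rk_pos hj, hS ▸ rk_le_card S _⟩

lemma natval_not_mem_bounds {S : Finset (Fin (n - 2))} {p : ℕ} {j : Fin (n - 2)}
    (hk1 : 1 ≤ k) (hk2 : k ≤ n - 1) (hS : S.card = k - 1)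
    (hpj : p = j.val + 1) (hj : j ∉ S) :
    k + 1 ≤ natval n k S p ∧ natval n k S p ≤ n - 1 := by
  rw [natval_not_mem hpj hj]
  have h1 : 1 ≤ rk Sᶜ j := rk_pos (Finset.mem_compl.2 hj)
  have h2 : rk Sᶜ j ≤ n - 1 - k := by
    have := rk_le_card Sᶜ j
    rw [compl_card hk1 hk2 hS] at this
    exact this
  omega

lemma exists_j {p : ℕ} (hp1 : 1 ≤ p) (hp2 : p ≤ n - 2) :
    ∃ j : Fin (n - 2), p = j.val + 1 :=
  ⟨⟨p - 1, by omega⟩, by simp; omega⟩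

lemma natval_lt {S : Finset (Fin (n - 2))} (hn : 2 ≤ n) (hk1 : 1 ≤ k) (hk2 : k ≤ n - 1)
    (hS : S.card = k - 1) (p : ℕ) : natval n k S p < n := by
  rcases Nat.eq_zero_or_pos p with rfl | hp1
  · rw [natval_zero]; omega
  rcases eq_or_ne p (n - 1) with rfl | hpl
  · rw [natval_last S hn]; omega
  rcases Nat.lt_or_ge p (n - 1) with hp2 | hp2
  · obtain ⟨j, hpj⟩ := exists_j (n := n) hp1 (by omega)
    by_cases hj : j ∈ S
    · have := natval_mem_bounds hS hpj hj
      omega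
    · have := natval_not_mem_bounds hk1 hk2 hS hpj hj
      omega
  · simp only [natval]
    rw [if_neg (by omega), if_neg (by omega), dif_neg (by omega)]
    omega

lemma Fm_val {S : Finset (Fin (n - 2))} (hn : 2 ≤ n) (hk1 : 1 ≤ k) (hk2 : k ≤ n - 1)
    (hS : S.card = k - 1) (p : Fin n) : (Fm n k S p).val = natval n k S p.val :=
  ZMod.val_cast_of_lt (natval_lt hn hk1 hk2 hS p.val)

lemma Gm_Fm {S : Finset (Fin (n - 2))} (hn : 2 ≤ n) (hk1 : 1 ≤ k) (hk2 : k ≤ n - 1)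
    (hS : S.card = k - 1) : Gm n k (Fm n k S) = S := by
  ext j
  have hj2 : j.val < n - 2 := j.isLt
  simp only [Gm, Finset.mem_filter, Finset.mem_univ, true_and]
  rw [Fm_val hn hk1 hk2 hS]
  simp only [pos_val]
  constructor
  · intro hlt
    by_contra hj
    have := natval_not_mem_bounds (p := j.val + 1) hk1 hk2 hS rfl hj
    omega
  · intro hj
    have := natval_mem_bounds (p := j.val + 1) hS rfl hj
    omega

lemma natval_ne_zero {S : Finset (Fin (n - 2))} (hk1 : 1 ≤ k) (hk2 : k ≤ n - 1)
    (hS : S.card = k - 1) {p : ℕ} (hp1 : 1 ≤ p) (hp2 : p ≤ n - 1) :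
    1 ≤ natval n k S p := by
  rcases eq_or_ne p (n - 1) with rfl | hpl
  · rw [natval_last S (by omega)]; omega
  obtain ⟨j, hpj⟩ := exists_j (n := n) hp1 (by omega)
  by_cases hj : j ∈ S
  · have := natval_mem_bounds hS hpj hj; omega
  · have := natval_not_mem_bounds hk1 hk2 hS hpj hj; omega

lemma natval_ne_k {S : Finset (Fin (n - 2))} (hk1 : 1 ≤ k) (hk2 : k ≤ n - 1)
    (hS : S.card = k - 1) {p : ℕ} (hp2 : p ≤ n - 2) :
    natval n k S p ≠ k := by
  rcases Nat.eq_zero_or_pos p with rfl | hp1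
  · rw [natval_zero]; omega
  obtain ⟨j, hpj⟩ := exists_j (n := n) hp1 hp2
  by_cases hj : j ∈ S
  · have := natval_mem_bounds hS hpj hj; omega
  · have := natval_not_mem_bounds hk1 hk2 hS hpj hj; omega

lemma natval_injective {S : Finset (Fin (n - 2))} (hn : 2 ≤ n) (hk1 : 1 ≤ k) (hk2 : k ≤ n - 1)
    (hS : S.card = k - 1) {p q : ℕ} (hp : p ≤ n - 1) (hq : q ≤ n - 1)
    (h : natval n k S p = natval n k S q) : p = q := by
  have main : ∀ p q : ℕ, p ≤ n - 1 → q ≤ n - 1 → natval n k S p = natval n k S q → p ≤ q →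
      p = q := by
    intro p q hp hq h hpq
    rcases Nat.eq_zero_or_pos p with rfl | hp1
    · rcases Nat.eq_zero_or_pos q with rfl | hq1
      · rfl
      · have := natval_ne_zero hk1 hk2 hS hq1 hq
        rw [natval_zero] at h; omega
    rcases eq_or_ne q (n - 1) with rfl | hql
    · rcases eq_or_ne p (n - 1) with rfl | hpl
      · rfl
      · rw [natval_last S hn] at h
        exact absurd h (natval_ne_k hk1 hk2 hS (by omega))
    have hpl : p ≠ n - 1 := by omega
    obtain ⟨jp, hpj⟩ := exists_j (n := n) hp1 (by omega)
    obtain ⟨jq, hqj⟩ := exists_j (n := n) (p := q) (by omega) (by omega)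
    suffices hjj : jp = jq by
      rw [hpj, hqj, hjj]
    by_cases hjp : jp ∈ S
    · by_cases hjq : jq ∈ S
      · rw [natval_mem hpj hjp, natval_mem hqj hjq] at h
        exact rk_injOn hjp hjq h
      · have h1 := natval_mem_bounds hS hpj hjp
        have h2 := natval_not_mem_bounds hk1 hk2 hS hqj hjq
        omega
    · by_cases hjq : jq ∈ S
      · have h1 := natval_not_mem_bounds hk1 hk2 hS hpj hjp
        have h2 := natval_mem_bounds hS hqj hjq
        omega
      · rw [natval_not_mem hpj hjp, natval_not_mem hqj hjq] at h
        have hb1 : 1 ≤ rk Sᶜ jp := rk_pos (Finset.mem_compl.2 hjp)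
        have hb2 : 1 ≤ rk Sᶜ jq := rk_pos (Finset.mem_compl.2 hjq)
        have hb3 := rk_le_card Sᶜ jp
        have hb4 := rk_le_card Sᶜ jq
        rw [compl_card hk1 hk2 hS] at hb3 hb4
        have heq : rk Sᶜ jp = rk Sᶜ jq := by omega
        exact rk_injOn (Finset.mem_compl.2 hjp) (Finset.mem_compl.2 hjq) heq
  rcases Nat.le_total p q with hpq | hpq
  · exact main p q hp hq h hpq
  · exact (main q p hq hp h.symm hpq).symm

lemma Fm_admissible {S : Finset (Fin (n - 2))} (hn : 2 ≤ n) (hk1 : 1 ≤ k) (hk2 : k ≤ n - 1)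
    (hS : S.card = k - 1) : Admissible n (Fm n k S) := by
  haveI : NeZero n := ⟨by omega⟩
  refine ⟨?_, ?_, ?_⟩
  · rw [Fintype.bijective_iff_injective_and_card]
    constructor
    · intro p q h
      have hv : natval n k S p.val = natval n k S q.val := by
        have := congrArg ZMod.val h
        rwa [Fm_val hn hk1 hk2 hS, Fm_val hn hk1 hk2 hS] at this
      have hple : p.val ≤ n - 1 := by have := p.isLt; omega
      have hqle : q.val ≤ n - 1 := by have := q.isLt; omega
      exact Fin.ext (natval_injective hn hk1 hk2 hS hple hqle hv)
    · simp [ZMod.card]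
  · intro h
    simp [Fm, natval_zero]
  · intro p hp
    suffices h : ∃ l : Fin n, l < p ∧ (natval n k S l.val + 1 = natval n k S p.val ∨
        natval n k S l.val = natval n k S p.val + 1 ∨
        (natval n k S p.val = n - 1 ∧ natval n k S l.val = 0)) by
      rcases h with ⟨l, hl, h1 | h2 | h3⟩
      · refine ⟨l, hl, Or.inl ?_⟩
        simp only [Fm]
        rw [← h1]
        push_cast
        ring
      · refine ⟨l, hl, Or.inr ?_⟩
        simp only [Fm]
        rw [h2]
        push_cast
        ring
      · refine ⟨l, hl, Or.inr ?_⟩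
        simp only [Fm]
        rw [h3.1, h3.2]
        have : ((n - 1 : ℕ) : ZMod n) = (n : ZMod n) - 1 := by
          push_cast [Nat.cast_sub (by omega : 1 ≤ n)]
          ring
        rw [this, ZMod.natCast_self]
        push_cast
        ring
    rcases eq_or_ne p.val (n - 1) with hpl | hpl
    · -- last position, value k
      have hpv : natval n k S p.val = k := by rw [hpl]; exact natval_last S hn
      rcases eq_or_ne k 1 with rfl | hk1'
      · refine ⟨⟨0, by omega⟩, ?_, Or.inl ?_⟩
        · rw [Fin.lt_def]; show 0 < p.val; omega
        · rw [hpv]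
          simp [natval_zero]
      · have hSne : S.Nonempty := by
          rw [← Finset.card_pos, hS]; omega
        set j := S.max' hSne with hj
        have hjmem : j ∈ S := S.max'_mem hSne
        have hjlt : j.val < n - 2 := j.isLt
        refine ⟨⟨j.val + 1, by omega⟩, ?_, Or.inl ?_⟩
        · rw [Fin.lt_def]; simp; omega
        · simp only [Fin.val_mk]
          rw [natval_mem rfl hjmem, hpv, hj, rk_max' S hSne, hS]
          omega
    · -- middle position
      have hp2 : p.val ≤ n - 2 := by have := p.isLt; omega
      obtain ⟨j, hpj⟩ := exists_j (n := n) hp hp2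
      by_cases hj : j ∈ S
      · have hpv := natval_mem (k := k) hpj hj
        rcases eq_or_ne (rk S j) 1 with h1 | h1
        · refine ⟨⟨0, by omega⟩, ?_, Or.inl ?_⟩
          · rw [Fin.lt_def]; show 0 < p.val; omega
          · rw [hpv, h1]
            simp [natval_zero]
        · have h2 : 2 ≤ rk S j := by
            have := rk_pos hj; omega
          rcases rk_pred hj h2 with ⟨j', hj'S, hj'lt, hj'rk⟩
          have hj'lt2 : j'.val < j.val := hj'lt
          refine ⟨⟨j'.val + 1, by have := j'.isLt; omega⟩, ?_, Or.inl ?_⟩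
          · rw [Fin.lt_def]; simp; omega
          · simp only [Fin.val_mk]
            rw [natval_mem rfl hj'S, hpv]
            exact hj'rk
      · have hpv := natval_not_mem (k := k) hpj hj
        have hjc : j ∈ Sᶜ := Finset.mem_compl.2 hj
        have hub := rk_le_card Sᶜ j
        rw [compl_card hk1 hk2 hS] at hub
        rcases eq_or_ne (rk Sᶜ j) 1 with h1 | h1
        · refine ⟨⟨0, by omega⟩, ?_, Or.inr (Or.inr ?_)⟩
          · rw [Fin.lt_def]; show 0 < p.val; omega
          · constructor
            · rw [hpv, h1]
            · simp [natval_zero]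
        · have h2 : 2 ≤ rk Sᶜ j := by
            have := rk_pos hjc; omega
          rcases rk_pred hjc h2 with ⟨j', hj'S, hj'lt, hj'rk⟩
          have hj'lt2 : j'.val < j.val := hj'lt
          refine ⟨⟨j'.val + 1, by have := j'.isLt; omega⟩, ?_, Or.inr (Or.inl ?_)⟩
          · rw [Fin.lt_def]; simp; omega
          · simp only [Fin.val_mk]
            rw [natval_not_mem rfl (Finset.mem_compl.1 hj'S), hpv]
            omega

lemma Fm_last {S : Finset (Fin (n - 2))} (hn : 2 ≤ n) :
    Fm n k S ⟨n - 1, by omega⟩ = (k : ZMod n) := by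
  simp only [Fm, Fin.val_mk]
  rw [natval_last S hn]


-- ZMod value helpers
lemma zmod_add_one_val {x : ZMod n} [NeZero n] (h : x.val + 1 < n) : (x + 1).val = x.val + 1 := by
  have hx : ((x.val : ℕ) : ZMod n) = x := ZMod.natCast_rightInverse x
  have : x + 1 = (((x.val + 1 : ℕ)) : ZMod n) := by
    push_cast
    rw [hx]
  rw [this, ZMod.val_cast_of_lt h]

lemma zmod_add_one_eq_zero {x : ZMod n} [NeZero n] (h : x.val = n - 1) : x + 1 = 0 := by
  have hx : ((x.val : ℕ) : ZMod n) = x := ZMod.natCast_rightInverse x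
  have hn1 : 1 ≤ n := Nat.one_le_iff_ne_zero.2 (NeZero.ne n)
  have : x + 1 = (((x.val + 1 : ℕ)) : ZMod n) := by
    push_cast
    rw [hx]
  rw [this, h]
  have : (n - 1) + 1 = n := by omega
  rw [this, ZMod.natCast_self]

lemma zmod_sub_one_val {x : ZMod n} [NeZero n] (h : 1 ≤ x.val) : (x - 1).val = x.val - 1 := by
  have hx : ((x.val : ℕ) : ZMod n) = x := ZMod.natCast_rightInverse x
  have hlt : x.val < n := ZMod.val_lt x
  have : x - 1 = (((x.val - 1 : ℕ)) : ZMod n) := by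
    have : ((x.val - 1 : ℕ) : ZMod n) + 1 = x := by
      push_cast [Nat.cast_sub h]
      rw [hx]
      ring
    exact (eq_sub_of_add_eq this).symm
  rw [this, ZMod.val_cast_of_lt (by omega)]

lemma zmod_sub_one_val_zero {x : ZMod n} [NeZero n] (h : x.val = 0) : (x - 1).val = n - 1 := by
  have hn1 : 1 ≤ n := Nat.one_le_iff_ne_zero.2 (NeZero.ne n)
  have hx : x = 0 := by
    have := ZMod.natCast_rightInverse (n := n) x
    rw [← this, h]
    simp
  have : x - 1 = (((n - 1 : ℕ)) : ZMod n) := by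
    rw [hx]
    rw [Nat.cast_sub hn1, ZMod.natCast_self]
    push_cast
    ring
  rw [this, ZMod.val_cast_of_lt (by omega)]

section Struct

variable (n k : ℕ) (f : Fin n → ZMod n)

/-- number of positions in `[1, q]` whose value is `< k`. -/
def cA (q : ℕ) : ℕ :=
  (Finset.univ.filter (fun i : Fin n => 1 ≤ i.val ∧ i.val ≤ q ∧ (f i).val < k)).card

/-- number of positions in `[1, q]` whose value is `> k`. -/
def cB (q : ℕ) : ℕ :=
  (Finset.univ.filter (fun i : Fin n => 1 ≤ i.val ∧ i.val ≤ q ∧ k < (f i).val)).card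

/-- the set of values in positions `[0, q]`. -/
def img (q : ℕ) : Finset ℕ :=
  (Finset.univ.filter (fun i : Fin n => i.val ≤ q)).image (fun i => (f i).val)

variable {n k f}

lemma cnt_succ (C : Fin n → Prop) [DecidablePred C] {q : ℕ} {p : Fin n} (hpq : p.val = q + 1) :
    (Finset.univ.filter (fun i : Fin n => 1 ≤ i.val ∧ i.val ≤ q + 1 ∧ C i)).card =
      (Finset.univ.filter (fun i : Fin n => 1 ≤ i.val ∧ i.val ≤ q ∧ C i)).card +
        (if C p then 1 else 0) := by
  by_cases hC : C p
  · rw [if_pos hC]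
    have heq : Finset.univ.filter (fun i : Fin n => 1 ≤ i.val ∧ i.val ≤ q + 1 ∧ C i) =
        insert p (Finset.univ.filter (fun i : Fin n => 1 ≤ i.val ∧ i.val ≤ q ∧ C i)) := by
      ext x
      simp only [Finset.mem_filter, Finset.mem_univ, true_and, Finset.mem_insert]
      constructor
      · rintro ⟨h1, h2, h3⟩
        by_cases hx : x.val = q + 1
        · exact Or.inl (Fin.ext (by omega))
        · exact Or.inr ⟨h1, by omega, h3⟩
      · rintro (rfl | ⟨h1, h2, h3⟩)
        · exact ⟨by omega, by omega, hC⟩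
        · exact ⟨h1, by omega, h3⟩
    rw [heq, Finset.card_insert_of_notMem]
    simp only [Finset.mem_filter, Finset.mem_univ, true_and, not_and]
    intro h1 h2
    omega
  · have heq : Finset.univ.filter (fun i : Fin n => 1 ≤ i.val ∧ i.val ≤ q + 1 ∧ C i) =
        Finset.univ.filter (fun i : Fin n => 1 ≤ i.val ∧ i.val ≤ q ∧ C i) := by
      apply Finset.filter_congr
      intro x _
      constructor
      · rintro ⟨h1, h2, h3⟩
        refine ⟨h1, ?_, h3⟩
        by_cases hx : x.val = q + 1
        · exact absurd (show C p by rwa [show p = x from Fin.ext (by omega)]) hC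
        · omega
      · rintro ⟨h1, h2, h3⟩
        exact ⟨h1, by omega, h3⟩
    rw [if_neg hC, heq, Nat.add_zero]

lemma img_zero (hn : 0 < n) : img n f 0 = {(f ⟨0, hn⟩).val} := by
  have heq : Finset.univ.filter (fun i : Fin n => i.val ≤ 0) = {(⟨0, hn⟩ : Fin n)} := by
    ext x
    simp only [Finset.mem_filter, Finset.mem_univ, true_and, Finset.mem_singleton]
    constructor
    · intro h
      apply Fin.ext
      simp only [Fin.val_mk]
      omega
    · rintro rfl
      simp
  rw [img, heq, Finset.image_singleton]

lemma img_succ {q : ℕ} {p : Fin n} (hpq : p.val = q + 1) :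
    img n f (q + 1) = insert (f p).val (img n f q) := by
  have heq : Finset.univ.filter (fun i : Fin n => i.val ≤ q + 1) =
      insert p (Finset.univ.filter (fun i : Fin n => i.val ≤ q)) := by
    ext x
    simp only [Finset.mem_filter, Finset.mem_univ, true_and, Finset.mem_insert]
    constructor
    · intro h
      by_cases hx : x.val = q + 1
      · exact Or.inl (Fin.ext (by omega))
      · exact Or.inr (by omega)
    · rintro (rfl | h)
      · omega
      · omega
  rw [img, heq, Finset.image_insert]
  rfl

lemma mem_img {q : ℕ} {i : Fin n} (h : i.val ≤ q) : (f i).val ∈ img n f q :=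
  Finset.mem_image_of_mem _ (Finset.mem_filter.2 ⟨Finset.mem_univ i, h⟩)


lemma adm_val_ne_zero (hn : 2 ≤ n) (hf : Admissible n f) {i : Fin n} (hi : 1 ≤ i.val) :
    (f i).val ≠ 0 := by
  haveI : NeZero n := ⟨by omega⟩
  intro h
  have h0 : f i = 0 := by
    rwa [ZMod.val_eq_zero] at h
  have : f i = f ⟨0, by omega⟩ := by rw [h0, hf.2.1 (by omega)]
  have := hf.1.1 this
  have := congrArg Fin.val this
  simp only [Fin.val_mk] at this
  omega

lemma adm_val_ne_k (hn : 2 ≤ n) (hf : Admissible n f)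
    (hlast : f ⟨n - 1, by omega⟩ = (k : ZMod n)) {i : Fin n} (hi : i.val ≤ n - 2) :
    (f i).val ≠ k := by
  haveI : NeZero n := ⟨by omega⟩
  intro h
  have h0 : f i = (k : ZMod n) := by
    rw [← ZMod.natCast_rightInverse (f i), h]
  have : f i = f ⟨n - 1, by omega⟩ := by rw [h0, hlast]
  have := hf.1.1 this
  have := congrArg Fin.val this
  simp only [Fin.val_mk] at this
  omega

lemma val_injOn (hn : 2 ≤ n) (hf : Admissible n f) {i i' : Fin n}
    (h : (f i).val = (f i').val) : i = i' := by
  haveI : NeZero n := ⟨by omega⟩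
  exact hf.1.1 (ZMod.val_injective n h)

lemma cA_le (hn : 2 ≤ n) (hf : Admissible n f) (q : ℕ) : cA n k f q ≤ k - 1 := by
  haveI : NeZero n := ⟨by omega⟩
  have := Finset.card_le_card_of_injOn (f := fun i : Fin n => (f i).val)
    (t := Finset.Icc 1 (k - 1)) ?_ ?_
    (s := Finset.univ.filter (fun i : Fin n => 1 ≤ i.val ∧ i.val ≤ q ∧ (f i).val < k))
  · rwa [Nat.card_Icc, show k - 1 + 1 - 1 = k - 1 by omega] at this
  · intro i hi
    rcases Finset.mem_filter.1 hi with ⟨-, h1, h2, h3⟩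
    have := adm_val_ne_zero hn hf h1
    simp only [Finset.mem_coe, Finset.mem_Icc]
    omega
  · intro i hi i' hi' h
    exact val_injOn hn hf h

lemma cB_le (hn : 2 ≤ n) (hf : Admissible n f) (q : ℕ) : cB n k f q ≤ n - 1 - k := by
  haveI : NeZero n := ⟨by omega⟩
  have := Finset.card_le_card_of_injOn (f := fun i : Fin n => (f i).val)
    (t := Finset.Icc (k + 1) (n - 1)) ?_ ?_
    (s := Finset.univ.filter (fun i : Fin n => 1 ≤ i.val ∧ i.val ≤ q ∧ k < (f i).val))
  · rwa [Nat.card_Icc, show n - 1 + 1 - (k + 1) = n - 1 - k by omega] at this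
  · intro i hi
    rcases Finset.mem_filter.1 hi with ⟨-, h1, h2, h3⟩
    have := ZMod.val_lt (f i)
    simp only [Finset.mem_coe, Finset.mem_Icc]
    omega
  · intro i hi i' hi' h
    exact val_injOn hn hf h

lemma not_mem_img (hn : 2 ≤ n) (hf : Admissible n f) {q : ℕ} {p : Fin n} (hpq : q < p.val) :
    (f p).val ∉ img n f q := by
  intro h
  rcases Finset.mem_image.1 h with ⟨i, hi, hval⟩
  have := val_injOn hn hf hval
  subst this
  have := (Finset.mem_filter.1 hi).2
  omega

lemma struct (hn : 2 ≤ n) (hk1 : 1 ≤ k) (hk2 : k ≤ n - 1) (hf : Admissible n f)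
    (hlast : f ⟨n - 1, Nat.sub_lt (by omega) one_pos⟩ = (k : ZMod n)) :
    ∀ q, q ≤ n - 2 →
      img n f q = Finset.Icc 0 (cA n k f q) ∪ Finset.Icc (n - cB n k f q) (n - 1) := by
  haveI : NeZero n := ⟨by omega⟩
  intro q
  induction q with
  | zero =>
    intro _
    have hA : cA n k f 0 = 0 := by
      rw [cA, Finset.card_eq_zero, Finset.filter_eq_empty_iff]
      rintro x - ⟨h1, h2, -⟩
      omega
    have hB : cB n k f 0 = 0 := by
      rw [cB, Finset.card_eq_zero, Finset.filter_eq_empty_iff]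
      rintro x - ⟨h1, h2, -⟩
      omega
    rw [img_zero (by omega), hf.2.1 (by omega), hA, hB]
    ext x
    simp only [Finset.mem_singleton, Finset.mem_union, Finset.mem_Icc, ZMod.val_zero]
    omega
  | succ q ih =>
    intro hq
    set p : Fin n := ⟨q + 1, by omega⟩ with hpdef
    have hpv : p.val = q + 1 := rfl
    obtain ⟨l, hl, hcase⟩ := hf.2.2 p (by omega)
    have hlq : l.val ≤ q := by
      have : l.val < p.val := hl
      omega
    have hflmem := mem_img (f := f) hlq
    rw [ih (by omega)] at hflmem
    have hnew := not_mem_img hn hf (show q < p.val by omega)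
    rw [ih (by omega)] at hnew
    have ha := cA_le (k := k) (f := f) hn hf q
    have hb := cB_le (k := k) (f := f) hn hf q
    have haq : cA n k f (q + 1) = cA n k f q + (if (f p).val < k then 1 else 0) :=
      cnt_succ _ hpv
    have hbq : cB n k f (q + 1) = cB n k f q + (if k < (f p).val then 1 else 0) :=
      cnt_succ _ hpv
    have hvk : (f p).val ≠ k := adm_val_ne_k hn hf hlast (by omega)
    have hvlt : (f p).val < n := ZMod.val_lt _
    have hfllt : (f l).val < n := ZMod.val_lt _
    have hnb1 : ¬ (f p).val ≤ cA n k f q := fun h =>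
      hnew (Finset.mem_union.2 (Or.inl (Finset.mem_Icc.2 ⟨Nat.zero_le _, h⟩)))
    have hnb2 : ¬ (n - cB n k f q ≤ (f p).val) := fun h =>
      hnew (Finset.mem_union.2 (Or.inr (Finset.mem_Icc.2 ⟨h, by omega⟩)))
    rcases hcase with hc | hc
    · -- f p = f l + 1
      rcases Finset.mem_union.1 hflmem with hfl | hfl
      · -- (f l).val ≤ cA q
        have hfla : (f l).val ≤ cA n k f q := (Finset.mem_Icc.1 hfl).2
        have hlt : (f l).val + 1 < n := by omega
        have hval : (f p).val = (f l).val + 1 := by rw [hc]; exact zmod_add_one_val hlt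
        have hpa : (f p).val = cA n k f q + 1 := by omega
        have hsmall : (f p).val < k := by omega
        rw [if_pos hsmall] at haq
        rw [if_neg (by omega)] at hbq
        rw [img_succ hpv, ih (by omega), haq, hbq, Nat.add_zero]
        ext x
        simp only [Finset.mem_insert, Finset.mem_union, Finset.mem_Icc]
        rw [hpa]
        omega
      · -- (f l).val in high arc
        rcases Finset.mem_Icc.1 hfl with ⟨hfl1, hfl2⟩
        have hbpos : 1 ≤ cB n k f q := by omega
        by_cases hend : (f l).val = n - 1
        · exfalso
          have h0 : f p = 0 := by rw [hc]; exact zmod_add_one_eq_zero hend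
          have h0v : (f p).val = 0 := by rw [h0, ZMod.val_zero]
          omega
        · exfalso
          have hlt : (f l).val + 1 < n := by omega
          have hval : (f p).val = (f l).val + 1 := by rw [hc]; exact zmod_add_one_val hlt
          omega
    · -- f p = f l - 1
      rcases Finset.mem_union.1 hflmem with hfl | hfl
      · have hfla : (f l).val ≤ cA n k f q := (Finset.mem_Icc.1 hfl).2
        by_cases h0 : (f l).val = 0
        · have hval : (f p).val = n - 1 := by rw [hc]; exact zmod_sub_one_val_zero h0
          have hb0 : cB n k f q = 0 := by omega
          have hbig : k < (f p).val := by omega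
          rw [if_neg (by omega)] at haq
          rw [if_pos hbig] at hbq
          rw [img_succ hpv, ih (by omega), haq, hbq, Nat.add_zero, hval, hb0]
          ext x
          simp only [Finset.mem_insert, Finset.mem_union, Finset.mem_Icc]
          omega
        · exfalso
          have hval : (f p).val = (f l).val - 1 := by
            rw [hc]; exact zmod_sub_one_val (by omega)
          omega
      · rcases Finset.mem_Icc.1 hfl with ⟨hfl1, hfl2⟩
        have hbpos : 1 ≤ cB n k f q := by omega
        have hval : (f p).val = (f l).val - 1 := by
          rw [hc]; exact zmod_sub_one_val (by omega)
        have hpb : (f p).val = n - cB n k f q - 1 := by omega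
        have hbig : k < (f p).val := by omega
        rw [if_neg (by omega)] at haq
        rw [if_pos hbig] at hbq
        rw [img_succ hpv, ih (by omega), haq, hbq, Nat.add_zero, hpb]
        ext x
        simp only [Finset.mem_insert, Finset.mem_union, Finset.mem_Icc]
        omega


lemma pointwise (hn : 2 ≤ n) (hk1 : 1 ≤ k) (hk2 : k ≤ n - 1) (hf : Admissible n f)
    (hlast : f ⟨n - 1, Nat.sub_lt (by omega) one_pos⟩ = (k : ZMod n)) {p : Fin n} (hp1 : 1 ≤ p.val)
    (hp2 : p.val ≤ n - 2) :
    ((f p).val < k → (f p).val = cA n k f p.val) ∧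
      (k < (f p).val → (f p).val = n - cB n k f p.val) := by
  haveI : NeZero n := ⟨by omega⟩
  set q := p.val - 1 with hqdef
  have hpv : p.val = q + 1 := by omega
  have hs1 := struct hn hk1 hk2 hf hlast (q + 1) (by omega)
  have hs0 := struct hn hk1 hk2 hf hlast q (by omega)
  have hmem : (f p).val ∈ img n f (q + 1) := mem_img (by omega)
  have hnew : (f p).val ∉ img n f q := not_mem_img hn hf (by omega)
  rw [hs1] at hmem
  rw [hs0] at hnew
  have haq : cA n k f (q + 1) = cA n k f q + (if (f p).val < k then 1 else 0) :=
    cnt_succ _ hpv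
  have hbq : cB n k f (q + 1) = cB n k f q + (if k < (f p).val then 1 else 0) :=
    cnt_succ _ hpv
  have ha0 := cA_le (k := k) (f := f) hn hf q
  have hb0 := cB_le (k := k) (f := f) hn hf q
  have ha1 := cA_le (k := k) (f := f) hn hf (q + 1)
  have hb1 := cB_le (k := k) (f := f) hn hf (q + 1)
  have hvlt : (f p).val < n := ZMod.val_lt _
  simp only [Finset.mem_union, Finset.mem_Icc, not_or, not_and, not_le] at hmem hnew
  constructor
  · intro hlt
    rw [if_pos hlt] at haq
    rw [if_neg (by omega)] at hbq
    rw [hpv, haq]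
    omega
  · intro hgt
    rw [if_neg (by omega)] at haq
    rw [if_pos hgt] at hbq
    rw [hpv, hbq]
    omega

lemma Gm_card (hn : 2 ≤ n) (hk1 : 1 ≤ k) (hk2 : k ≤ n - 1) (hf : Admissible n f)
    (hlast : f ⟨n - 1, Nat.sub_lt (by omega) one_pos⟩ = (k : ZMod n)) : (Gm n k f).card = k - 1 := by
  haveI : NeZero n := ⟨by omega⟩
  have hcard : (Gm n k f).card = (Finset.Icc 1 (k - 1)).card := by
    apply Finset.card_bij (fun j _ => (f (pos n j)).val)
    · intro j hj
      have hjlt : (f (pos n j)).val < k := (Finset.mem_filter.1 hj).2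
      have := adm_val_ne_zero hn hf (i := pos n j) (by rw [pos_val]; omega)
      simp only [Finset.mem_Icc]
      omega
    · intro j hj j' hj' h
      have := val_injOn hn hf h
      have := congrArg Fin.val this
      simp only [pos_val] at this
      exact Fin.ext (by omega)
    · intro v hv
      rcases Finset.mem_Icc.1 hv with ⟨hv1, hv2⟩
      obtain ⟨i, hi⟩ := hf.1.2 ((v : ℕ) : ZMod n)
      have hival : (f i).val = v := by rw [hi, ZMod.val_cast_of_lt (by omega)]
      have hi1 : 1 ≤ i.val := by
        by_contra h
        have : i = ⟨0, by omega⟩ := Fin.ext (by simp only [Fin.val_mk]; omega)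
        rw [this, hf.2.1 (by omega), ZMod.val_zero] at hival
        omega
      have hi2 : i.val ≤ n - 2 := by
        by_contra h
        have : i = ⟨n - 1, by omega⟩ := Fin.ext (by simp only [Fin.val_mk]; have := i.isLt; omega)
        rw [this, hlast, ZMod.val_cast_of_lt (by omega)] at hival
        omega
      refine ⟨⟨i.val - 1, by omega⟩, ?_, ?_⟩
      · have hpi : pos n ⟨i.val - 1, by omega⟩ = i := Fin.ext (by rw [pos_val]; simp; omega)
        simp only [Gm, Finset.mem_filter, Finset.mem_univ, true_and, hpi]
        omega
      · have hpi : pos n ⟨i.val - 1, by omega⟩ = i := Fin.ext (by rw [pos_val]; simp; omega)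
        rw [hpi, hival]
  rw [hcard, Nat.card_Icc]
  omega

lemma Gm_inj {f f' : Fin n → ZMod n} (hn : 2 ≤ n) (hk1 : 1 ≤ k) (hk2 : k ≤ n - 1)
    (hf : Admissible n f) (hf' : Admissible n f')
    (hlast : f ⟨n - 1, Nat.sub_lt (by omega) one_pos⟩ = (k : ZMod n))
    (hlast' : f' ⟨n - 1, Nat.sub_lt (by omega) one_pos⟩ = (k : ZMod n))
    (hG : Gm n k f = Gm n k f') : f = f' := by
  haveI : NeZero n := ⟨by omega⟩
  have hiff : ∀ i : Fin n, 1 ≤ i.val → i.val ≤ n - 2 → ((f i).val < k ↔ (f' i).val < k) := by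
    intro i h1 h2
    have hj : pos n (⟨i.val - 1, by omega⟩ : Fin (n - 2)) = i := Fin.ext (by rw [pos_val]; simp; omega)
    have := Finset.ext_iff.1 hG (⟨i.val - 1, by omega⟩ : Fin (n - 2))
    simp only [Gm, Finset.mem_filter, Finset.mem_univ, true_and, hj] at this
    exact this
  have hcA : ∀ q, q ≤ n - 2 → cA n k f q = cA n k f' q := by
    intro q hq
    apply congrArg Finset.card
    apply Finset.filter_congr
    intro i _
    constructor
    · rintro ⟨h1, h2, h3⟩
      exact ⟨h1, h2, (hiff i h1 (le_trans h2 hq)).1 h3⟩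
    · rintro ⟨h1, h2, h3⟩
      exact ⟨h1, h2, (hiff i h1 (le_trans h2 hq)).2 h3⟩
  have hcB : ∀ q, q ≤ n - 2 → cB n k f q = cB n k f' q := by
    intro q hq
    apply congrArg Finset.card
    apply Finset.filter_congr
    intro i _
    constructor
    · rintro ⟨h1, h2, h3⟩
      refine ⟨h1, h2, ?_⟩
      have hx := hiff i h1 (le_trans h2 hq)
      have hy := adm_val_ne_k hn hf hlast (i := i) (le_trans h2 hq)
      have hz := adm_val_ne_k hn hf' hlast' (i := i) (le_trans h2 hq)
      omega
    · rintro ⟨h1, h2, h3⟩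
      refine ⟨h1, h2, ?_⟩
      have hx := hiff i h1 (le_trans h2 hq)
      have hy := adm_val_ne_k hn hf hlast (i := i) (le_trans h2 hq)
      have hz := adm_val_ne_k hn hf' hlast' (i := i) (le_trans h2 hq)
      omega
  funext p
  rcases Nat.eq_zero_or_pos p.val with h0 | hp1
  · have hp : p = ⟨0, by omega⟩ := Fin.ext h0
    rw [hp, hf.2.1 (by omega), hf'.2.1 (by omega)]
  rcases eq_or_ne p.val (n - 1) with hpl | hpl
  · have hp : p = ⟨n - 1, by omega⟩ := Fin.ext hpl
    rw [hp, hlast, hlast']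
  have hp2 : p.val ≤ n - 2 := by have := p.isLt; omega
  have hw := pointwise hn hk1 hk2 hf hlast hp1 hp2
  have hw' := pointwise hn hk1 hk2 hf' hlast' hp1 hp2
  have hx := hiff p hp1 hp2
  have hy := adm_val_ne_k hn hf hlast (i := p) hp2
  have hz := adm_val_ne_k hn hf' hlast' (i := p) hp2
  have hA := hcA p.val hp2
  have hB := hcB p.val hp2
  apply ZMod.val_injective
  by_cases hlt : (f p).val < k
  · rw [hw.1 hlt, hw'.1 (hx.1 hlt), hA]
  · have h1 : k < (f p).val := by omega
    have h2 : k < (f' p).val := by omega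
    rw [hw.2 h1, hw'.2 h2, hB]

end Struct

/-- for `n ≥ 2` and `1 ≤ k ≤ n−1`, the number of admissible sequences whose
last entry equals `k` in `ZMod n` is the binomial coefficient `C(n−2, k−1)`. -/
theorem stmt_6 (n k : ℕ) (hn : 2 ≤ n) (hk1 : 1 ≤ k) (hk2 : k ≤ n - 1) :
    Nat.card {f : Fin n → ZMod n //
        Admissible n f ∧ f ⟨n - 1, by omega⟩ = (k : ZMod n)} =
      (n - 2).choose (k - 1) := by
  haveI : NeZero n := ⟨by omega⟩
  set Φ : {S : Finset (Fin (n - 2)) // S.card = k - 1} →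
      {f : Fin n → ZMod n // Admissible n f ∧ f ⟨n - 1, by omega⟩ = (k : ZMod n)} :=
    fun S => ⟨Fm n k S.1, Fm_admissible hn hk1 hk2 S.2, Fm_last hn⟩ with hΦ
  have hbij : Function.Bijective Φ := by
    constructor
    · rintro ⟨S, hS⟩ ⟨S', hS'⟩ h
      have : Fm n k S = Fm n k S' := congrArg Subtype.val h
      have h2 : Gm n k (Fm n k S) = Gm n k (Fm n k S') := by rw [this]
      rw [Gm_Fm hn hk1 hk2 hS, Gm_Fm hn hk1 hk2 hS'] at h2
      exact Subtype.ext h2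
    · rintro ⟨f, hf, hlast⟩
      have hGcard : (Gm n k f).card = k - 1 := Gm_card hn hk1 hk2 hf hlast
      refine ⟨⟨Gm n k f, hGcard⟩, ?_⟩
      apply Subtype.ext
      simp only [hΦ]
      apply Gm_inj hn hk1 hk2 (Fm_admissible hn hk1 hk2 hGcard) hf (Fm_last hn) hlast
      exact Gm_Fm hn hk1 hk2 hGcard
  rw [← Nat.card_eq_of_bijective Φ hbij, Nat.card_eq_fintype_card,
    Fintype.card_finset_len, Fintype.card_fin]

end Main
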